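/- For any parity-check matrix H of a binary linear code of minimum distance d ≤ 3, the stopping distance s of H equals d. -/
import Mathlib


open Finset

variable {ι : Type*}

/-- Support of a binary word. -/
def supp [Fintype ι] (x : ι → ZMod 2) : Finset ι :=
  Finset.univ.filter (fun j => x j ≠ 0)

/-- Hamming weight of a binary word. -/
def wt [Fintype ι] (x : ι → ZMod 2) : ℕ := (supp x).card

/-- `S` is a stopping set for the matrix `H` if no row of the column-submatrix `H_S`
has weight exactly one. -/
def IsStoppingSet {ρ : Type*} (H : Matrix ρ ι (ZMod 2)) (S : Finset ι) : Prop :=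
  ∀ i : ρ, (S.filter (fun j => H i j = 1)).card ≠ 1

/-- The dual code of a binary linear code. -/
def dualCode [Fintype ι] (C : Submodule (ZMod 2) (ι → ZMod 2)) :
    Submodule (ZMod 2) (ι → ZMod 2) where
  carrier := {y | ∀ x ∈ C, ∑ j, y j * x j = 0}
  add_mem' := by
    intro a b ha hb x hx
    simp only [Set.mem_setOf_eq] at *
    simp [Pi.add_apply, add_mul, Finset.sum_add_distrib, ha x hx, hb x hx]
  zero_mem' := by intro x hx; simp
  smul_mem' := by
    intro c a ha x hx
    simp only [Set.mem_setOf_eq] at *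
    simp [Pi.smul_apply, smul_eq_mul, mul_assoc, ← Finset.mul_sum, ha x hx]

/-- The complete parity-check matrix of `C`: rows indexed by all dual codewords. -/
def Hstar [Fintype ι] (C : Submodule (ZMod 2) (ι → ZMod 2)) :
    Matrix (dualCode C) ι (ZMod 2) := fun y j => (y : ι → ZMod 2) j

/-- A code is minimum stopping if every stopping set of its complete parity-check
matrix is the support of a codeword. -/
def MinStopping [Fintype ι] (C : Submodule (ZMod 2) (ι → ZMod 2)) : Prop :=
  ∀ S : Finset ι, IsStoppingSet (Hstar C) S → ∃ c ∈ C, supp c = S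

/-- `H` is a parity-check matrix for `C` : the words checked by all rows of `H`
are exactly the codewords of `C`. -/
def IsPCM {ρ : Type*} [Fintype ι] (C : Submodule (ZMod 2) (ι → ZMod 2))
    (H : Matrix ρ ι (ZMod 2)) : Prop :=
  ∀ x : ι → ZMod 2, x ∈ C ↔ ∀ i : ρ, ∑ j, H i j * x j = 0

lemma zmod2_cases (a : ZMod 2) : a = 0 ∨ a = 1 := by revert a; decide

lemma key_sum {n : ℕ} {ρ : Type*} (H : Matrix ρ (Fin n) (ZMod 2)) (x : Fin n → ZMod 2) (i : ρ) :
    ∑ j, H i j * x j = (((supp x).filter (fun j => H i j = 1)).card : ZMod 2) := by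
  rw [supp, Finset.filter_filter, Finset.card_filter]
  push_cast
  apply Finset.sum_congr rfl
  intro j _
  rcases zmod2_cases (x j) with h | h <;> rcases zmod2_cases (H i j) with h2 | h2 <;>
    simp [h, h2]

/-- For any parity-check matrix H of a binary linear code of minimum distance d ≤ 3,
the stopping distance of H equals d. -/
theorem stmt_6 {n d : ℕ} {ρ : Type*} (C : Submodule (ZMod 2) (Fin n → ZMod 2))
    (hd : ∀ c ∈ C, c ≠ 0 → d ≤ wt c)
    (hex : ∃ c ∈ C, c ≠ 0 ∧ wt c = d)
    (hd3 : d ≤ 3)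
    (H : Matrix ρ (Fin n) (ZMod 2)) (hH : IsPCM C H) :
    sInf {i : ℕ | 0 < i ∧ ∃ S : Finset (Fin n), S.card = i ∧ IsStoppingSet H S} = d := by
  have hdmem : d ∈ {i : ℕ | 0 < i ∧ ∃ S : Finset (Fin n), S.card = i ∧ IsStoppingSet H S} := by
    obtain ⟨c, hcC, hc0, hcw⟩ := hex
    obtain ⟨j, hj⟩ := Function.ne_iff.mp hc0
    simp only [Pi.zero_apply] at hj
    have hjmem : j ∈ supp c := by simp [supp, hj]
    refine ⟨?_, supp c, hcw, ?_⟩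
    · rw [← hcw]
      exact Finset.card_pos.mpr ⟨j, hjmem⟩
    · intro i hcard
      have h0 := (hH c).mp hcC i
      rw [key_sum, hcard] at h0
      simp at h0
  have hlow : ∀ m ∈ {i : ℕ | 0 < i ∧ ∃ S : Finset (Fin n), S.card = i ∧ IsStoppingSet H S},
      d ≤ m := by
    rintro m ⟨hm0, S, hScard, hSstop⟩
    rcases le_or_gt 3 m with h3 | h3
    · omega
    · set x : Fin n → ZMod 2 := fun j => if j ∈ S then 1 else 0 with hxdef
      have hsupp : supp x = S := by
        ext j
        by_cases hj : j ∈ S <;> simp [supp, hxdef, hj]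
      have hxC : x ∈ C := by
        rw [hH]
        intro i
        rw [key_sum, hsupp]
        have h1 := hSstop i
        have h2 : (S.filter (fun j => H i j = 1)).card ≤ S.card :=
          Finset.card_filter_le _ _
        have : (S.filter (fun j => H i j = 1)).card = 0 ∨
            (S.filter (fun j => H i j = 1)).card = 2 := by omega
        rcases this with h | h <;> rw [h] <;> decide
      have hx0 : x ≠ 0 := by
        obtain ⟨j, hj⟩ := Finset.card_pos.mp (hScard ▸ hm0)
        intro h
        have := congrFun h j
        simp [hxdef, hj] at this
      have := hd x hxC hx0
      rwa [wt, hsupp, hScard] at this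
  exact le_antisymm (Nat.sInf_le hdmem) (le_csInf ⟨d, hdmem⟩ hlow)
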